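/- Let μ₁ > μ₂ > 0 and 1 < p < 2 be real numbers and let β ≥ (p−1)μ₂. Define f(τ) = (1+τ²)/(μ₁ + 2βτ^p + μ₂τ^{2p})^{1/p} for τ ≥ 0. Then there exists τ₀ ∈ (0, 1) such that f is strictly decreasing on [0, τ₀] and strictly increasing on [τ₀, +∞); consequently τ₀ is the unique minimum point of f on [0, +∞) and 0 is a local maximum point of f. -/

import Mathlib

open Set

private lemma amgm_aux {p : ℝ} (hp1 : 1 < p) (hp2 : p < 2) {t : ℝ} (ht : 0 < t) (hne : t ≠ 1) :
    2 * t ^ p < p * t ^ 2 + (2 - p) := by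
  set r : ℝ → ℝ := fun s => p * s ^ 2 + (2 - p) - 2 * s ^ p with hr
  have hd : ∀ s : ℝ, s ≠ 0 → HasDerivAt r (p * (2 * s) - 2 * (p * s ^ (p - 1))) s := by
    intro s hs
    have h1 : HasDerivAt (fun s : ℝ => p * s ^ 2 + (2 - p)) (p * (2 * s)) s := by
      simpa using ((hasDerivAt_pow 2 s).const_mul p).add_const (2 - p)
    have h2 : HasDerivAt (fun s : ℝ => 2 * s ^ p) (2 * (p * s ^ (p - 1))) s :=
      (Real.hasDerivAt_rpow_const (Or.inl hs)).const_mul 2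
    exact h1.sub h2
  have hr1 : r 1 = 0 := by simp [hr, Real.one_rpow]
  have key : 0 < r t := by
    rcases hne.lt_or_gt with h | h
    · have hanti : StrictAntiOn r (Icc 0 1) := by
        apply strictAntiOn_of_deriv_neg (convex_Icc 0 1)
        · intro s hs
          by_cases h0 : s = 0
          · subst h0
            apply ContinuousAt.continuousWithinAt
            apply ContinuousAt.sub
            · fun_prop
            · exact (Real.continuousAt_rpow_const 0 p (Or.inr (by linarith))).const_mul 2
          · exact ((hd s h0).continuousAt).continuousWithinAt
        · intro x hx
          rw [interior_Icc] at hx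
          rw [(hd x (ne_of_gt hx.1)).deriv]
          have h1 : x ^ (1:ℝ) < x ^ (p - 1) :=
            Real.rpow_lt_rpow_of_exponent_gt hx.1 hx.2 (by linarith)
          rw [Real.rpow_one] at h1
          nlinarith
      have := hanti (mem_Icc.2 ⟨ht.le, h.le⟩) (mem_Icc.2 ⟨zero_le_one, le_refl 1⟩) h
      rw [hr1] at this
      exact this
    · have hmono : StrictMonoOn r (Ici 1) := by
        apply strictMonoOn_of_deriv_pos (convex_Ici 1)
        · intro s hs
          have : (1:ℝ) ≤ s := hs
          exact ((hd s (by linarith)).continuousAt).continuousWithinAt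
        · intro x hx
          rw [interior_Ici] at hx
          have hx1 : (1:ℝ) < x := hx
          rw [(hd x (by linarith)).deriv]
          have h1 : x ^ (p - 1) < x ^ (1:ℝ) :=
            Real.rpow_lt_rpow_of_exponent_lt hx1 (by linarith)
          rw [Real.rpow_one] at h1
          nlinarith
      have := hmono (mem_Ici.2 (le_refl 1)) (mem_Ici.2 h.le) h
      rw [hr1] at this
      exact this
  have key' : 0 < p * t ^ 2 + (2 - p) - 2 * t ^ p := key
  linarith

private lemma Q_strictMono {p μ₁ μ₂ β : ℝ} (hμ₂ : 0 < μ₂)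
    (hp1 : 1 < p) (hp2 : p < 2) (hβ : (p - 1) * μ₂ ≤ β) :
    StrictMonoOn (fun t : ℝ => μ₁ + β * t ^ p - β * t ^ (p - 2) - μ₂ * t ^ (2 * p - 2))
      (Set.Ioi 0) := by
  set Q : ℝ → ℝ := fun t => μ₁ + β * t ^ p - β * t ^ (p - 2) - μ₂ * t ^ (2 * p - 2) with hQ
  have hd : ∀ t : ℝ, 0 < t →
      HasDerivAt Q (β * (p * t ^ (p - 1)) - β * ((p - 2) * t ^ (p - 2 - 1))
        - μ₂ * ((2 * p - 2) * t ^ (2 * p - 2 - 1))) t := by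
    intro t ht
    have h1 : HasDerivAt (fun t : ℝ => μ₁ + β * t ^ p) (β * (p * t ^ (p - 1))) t :=
      ((Real.hasDerivAt_rpow_const (Or.inl ht.ne')).const_mul β).const_add μ₁
    have h2 : HasDerivAt (fun t : ℝ => β * t ^ (p - 2)) (β * ((p - 2) * t ^ (p - 2 - 1))) t :=
      (Real.hasDerivAt_rpow_const (Or.inl ht.ne')).const_mul β
    have h3 : HasDerivAt (fun t : ℝ => μ₂ * t ^ (2 * p - 2))
        (μ₂ * ((2 * p - 2) * t ^ (2 * p - 2 - 1))) t :=
      (Real.hasDerivAt_rpow_const (Or.inl ht.ne')).const_mul μ₂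
    exact (h1.sub h2).sub h3
  have hderiv_pos : ∀ t : ℝ, 0 < t → t ≠ 1 → 0 < deriv Q t := by
    intro t ht hne
    rw [(hd t ht).deriv]
    have e1 : t ^ (p - 1) = t ^ (p - 3) * t ^ 2 := by
      rw [show p - 1 = (p - 3) + 2 by ring, Real.rpow_add ht,
        show (2:ℝ) = ((2:ℕ):ℝ) by norm_num, Real.rpow_natCast]
    have e2 : t ^ (p - 2 - 1) = t ^ (p - 3) := by rw [show p - 2 - 1 = p - 3 by ring]
    have e3 : t ^ (2 * p - 2 - 1) = t ^ (p - 3) * t ^ p := by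
      rw [show 2 * p - 2 - 1 = (p - 3) + p by ring, Real.rpow_add ht]
    rw [e1, e2, e3]
    have hS := amgm_aux hp1 hp2 ht hne
    have hSpos : 0 < p * t ^ 2 + (2 - p) := by
      have := Real.rpow_pos_of_pos ht p
      nlinarith
    have hpm : 0 < (p - 1) * μ₂ := by nlinarith
    have h3 : 0 < t ^ (p - 3) := Real.rpow_pos_of_pos ht _
    have hβS : (p - 1) * μ₂ * (p * t ^ 2 + (2 - p)) ≤ β * (p * t ^ 2 + (2 - p)) :=
      mul_le_mul_of_nonneg_right hβ hSpos.le
    have hSam : (p - 1) * μ₂ * (2 * t ^ p) < (p - 1) * μ₂ * (p * t ^ 2 + (2 - p)) :=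
      mul_lt_mul_of_pos_left hS hpm
    have hinner : 0 < β * (p * t ^ 2 + (2 - p)) - 2 * (p - 1) * μ₂ * t ^ p := by nlinarith
    calc (0:ℝ) < t ^ (p - 3) * (β * (p * t ^ 2 + (2 - p)) - 2 * (p - 1) * μ₂ * t ^ p) :=
          mul_pos h3 hinner
      _ = β * (p * (t ^ (p - 3) * t ^ 2)) - β * ((p - 2) * t ^ (p - 3))
          - μ₂ * ((2 * p - 2) * (t ^ (p - 3) * t ^ p)) := by ring
  have hm1 : StrictMonoOn Q (Ioc 0 1) := by
    apply strictMonoOn_of_deriv_pos (convex_Ioc 0 1)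
    · exact fun t ht => ((hd t ht.1).continuousAt).continuousWithinAt
    · intro x hx
      rw [interior_Ioc] at hx
      exact hderiv_pos x hx.1 (ne_of_lt hx.2)
  have hm2 : StrictMonoOn Q (Ici 1) := by
    apply strictMonoOn_of_deriv_pos (convex_Ici 1)
    · intro t ht
      have : (1:ℝ) ≤ t := ht
      exact ((hd t (by linarith)).continuousAt).continuousWithinAt
    · intro x hx
      rw [interior_Ici] at hx
      have hx1 : (1:ℝ) < x := hx
      exact hderiv_pos x (by linarith) (by linarith)
  intro x hx y hy hxy
  have hx0 : (0:ℝ) < x := hx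
  have hy0 : (0:ℝ) < y := hy
  rcases le_or_gt y 1 with hy1 | hy1
  · exact hm1 ⟨hx0, by linarith⟩ ⟨hy0, hy1⟩ hxy
  · rcases le_or_gt x 1 with hx1 | hx1
    · calc Q x ≤ Q 1 := by
            rcases eq_or_lt_of_le hx1 with h | h
            · rw [h]
            · exact (hm1 ⟨hx0, hx1⟩ ⟨one_pos, le_refl 1⟩ h).le
        _ < Q y := hm2 (mem_Ici.2 (le_refl 1)) (mem_Ici.2 hy1.le) hy1
    · exact hm2 (mem_Ici.2 hx1.le) (mem_Ici.2 (by linarith)) hxy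

private lemma hasDerivAt_F {p μ₁ μ₂ β τ : ℝ} (hμ₁ : 0 < μ₁) (hμ₂ : 0 < μ₂) (hβ0 : 0 < β)
    (hp1 : 1 < p) (hτ : 0 < τ) :
    HasDerivAt (fun τ : ℝ => (1 + τ ^ 2) / (μ₁ + 2 * β * τ ^ p + μ₂ * τ ^ (2 * p)) ^ (1 / p))
      ((μ₁ + 2 * β * τ ^ p + μ₂ * τ ^ (2 * p)) ^ (1 / p - 1)
        * (2 * τ * (μ₁ + β * τ ^ p - β * τ ^ (p - 2) - μ₂ * τ ^ (2 * p - 2)))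
        / (((μ₁ + 2 * β * τ ^ p + μ₂ * τ ^ (2 * p)) ^ (1 / p)) ^ 2)) τ := by
  have hp0 : (0:ℝ) < p := by linarith
  have hA : 0 < τ ^ p := Real.rpow_pos_of_pos hτ p
  have hB : 0 < τ ^ (2 * p) := Real.rpow_pos_of_pos hτ _
  have hG : 0 < μ₁ + 2 * β * τ ^ p + μ₂ * τ ^ (2 * p) := by nlinarith
  have hGd : HasDerivAt (fun t : ℝ => μ₁ + 2 * β * t ^ p + μ₂ * t ^ (2 * p))
      (2 * β * (p * τ ^ (p - 1)) + μ₂ * (2 * p * τ ^ (2 * p - 1))) τ := by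
    have h1 : HasDerivAt (fun t : ℝ => μ₁ + 2 * β * t ^ p) (2 * β * (p * τ ^ (p - 1))) τ :=
      ((Real.hasDerivAt_rpow_const (Or.inl hτ.ne')).const_mul (2 * β)).const_add μ₁
    have h2 : HasDerivAt (fun t : ℝ => μ₂ * t ^ (2 * p)) (μ₂ * (2 * p * τ ^ (2 * p - 1))) τ :=
      (Real.hasDerivAt_rpow_const (Or.inl hτ.ne')).const_mul μ₂
    exact h1.add h2
  have hden : HasDerivAt (fun t : ℝ => (μ₁ + 2 * β * t ^ p + μ₂ * t ^ (2 * p)) ^ (1 / p))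
      ((2 * β * (p * τ ^ (p - 1)) + μ₂ * (2 * p * τ ^ (2 * p - 1))) * (1 / p)
        * (μ₁ + 2 * β * τ ^ p + μ₂ * τ ^ (2 * p)) ^ (1 / p - 1)) τ :=
    hGd.rpow_const (Or.inl hG.ne')
  have hnum : HasDerivAt (fun t : ℝ => 1 + t ^ 2) (2 * τ) τ := by
    simpa using (hasDerivAt_pow 2 τ).const_add 1
  have hdne : (μ₁ + 2 * β * τ ^ p + μ₂ * τ ^ (2 * p)) ^ (1 / p) ≠ 0 :=
    (Real.rpow_pos_of_pos hG _).ne'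
  have h := hnum.div hden hdne
  refine h.congr_deriv (Eq.symm ?_)
  have hGe : (μ₁ + 2 * β * τ ^ p + μ₂ * τ ^ (2 * p)) ^ (1 / p)
      = (μ₁ + 2 * β * τ ^ p + μ₂ * τ ^ (2 * p)) ^ (1 / p - 1)
        * (μ₁ + 2 * β * τ ^ p + μ₂ * τ ^ (2 * p)) := by
    rw [← Real.rpow_add_one hG.ne']
    norm_num
  rw [div_eq_div_iff (by positivity) (by positivity)]
  rw [hGe]
  have e1 : τ ^ (p - 1) = τ ^ p / τ := by rw [Real.rpow_sub hτ, Real.rpow_one]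
  have e2 : τ ^ (2 * p - 1) = τ ^ (2 * p) / τ := by rw [Real.rpow_sub hτ, Real.rpow_one]
  have e3 : τ ^ (p - 2) = τ ^ p / τ ^ 2 := by
    rw [Real.rpow_sub hτ, show (2:ℝ) = ((2:ℕ):ℝ) by norm_num, Real.rpow_natCast]
  have e4 : τ ^ (2 * p - 2) = τ ^ (2 * p) / τ ^ 2 := by
    rw [Real.rpow_sub hτ, show (2:ℝ) = ((2:ℕ):ℝ) by norm_num, Real.rpow_natCast]
  rw [e1, e2, e3, e4]
  field_simp
  ring

private lemma existence_of_zero {p μ₁ μ₂ β : ℝ} (h12 : μ₂ < μ₁) (hμ₂ : 0 < μ₂)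
    (hp1 : 1 < p) (hp2 : p < 2) (hβ : (p - 1) * μ₂ ≤ β) :
    ∃ τ₀ : ℝ, 0 < τ₀ ∧ τ₀ < 1 ∧
      μ₁ + β * τ₀ ^ p - β * τ₀ ^ (p - 2) - μ₂ * τ₀ ^ (2 * p - 2) = 0 := by
  have hβ0 : 0 < β := lt_of_lt_of_le (by nlinarith) hβ
  have hμ₁ : 0 < μ₁ := lt_trans hμ₂ h12
  set Q : ℝ → ℝ := fun t => μ₁ + β * t ^ p - β * t ^ (p - 2) - μ₂ * t ^ (2 * p - 2) with hQdef
  set c : ℝ := (β / (μ₁ + β)) ^ ((1:ℝ) / (2 - p)) with hcdef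
  have h2p : (2:ℝ) - p ≠ 0 := by linarith
  have hbase0 : 0 < β / (μ₁ + β) := by positivity
  have hbase1 : β / (μ₁ + β) < 1 := by
    rw [div_lt_one (by linarith)]; linarith
  have hc0 : 0 < c := Real.rpow_pos_of_pos hbase0 _
  have hc1 : c < 1 := Real.rpow_lt_one hbase0.le hbase1 (one_div_pos.2 (by linarith))
  have hcval : c ^ (p - 2) = (μ₁ + β) / β := by
    rw [hcdef, ← Real.rpow_mul hbase0.le,
      show (1:ℝ) / (2 - p) * (p - 2) = -1 by rw [div_mul_eq_mul_div, one_mul, div_eq_iff h2p]; ring,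
      Real.rpow_neg_one, inv_div]
  set a : ℝ := c / 2 with hadef
  have ha0 : 0 < a := by positivity
  have hac : a < c := by rw [hadef]; linarith
  have ha1 : a < 1 := by linarith
  have hap2 : (μ₁ + β) / β < a ^ (p - 2) := by
    rw [← hcval]
    exact Real.rpow_lt_rpow_of_neg ha0 hac (by linarith)
  have hap : a ^ p < 1 := Real.rpow_lt_one ha0.le ha1 (by linarith)
  have hQa : Q a < 0 := by
    have h1 : β * ((μ₁ + β) / β) < β * a ^ (p - 2) := mul_lt_mul_of_pos_left hap2 hβ0
    have h2 : β * ((μ₁ + β) / β) = μ₁ + β := by field_simp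
    have h3 : β * a ^ p < β * 1 := mul_lt_mul_of_pos_left hap hβ0
    have h4 : 0 < μ₂ * a ^ (2 * p - 2) := mul_pos hμ₂ (Real.rpow_pos_of_pos ha0 _)
    have : Q a = μ₁ + β * a ^ p - β * a ^ (p - 2) - μ₂ * a ^ (2 * p - 2) := rfl
    rw [this]
    linarith
  have hQ1 : 0 < Q 1 := by
    have : Q 1 = μ₁ + β * 1 - β * 1 - μ₂ * 1 := by
      simp [hQdef, Real.one_rpow]
    rw [this]; linarith
  have hQcont : ContinuousOn Q (Icc a 1) := by
    intro t htmem
    have ht0 : 0 < t := lt_of_lt_of_le ha0 htmem.1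
    apply ContinuousAt.continuousWithinAt
    exact (((continuousAt_const.mul
        (Real.continuousAt_rpow_const t p (Or.inl ht0.ne'))).const_add μ₁).sub
        (continuousAt_const.mul
          (Real.continuousAt_rpow_const t (p - 2) (Or.inl ht0.ne')))).sub
        (continuousAt_const.mul
          (Real.continuousAt_rpow_const t (2 * p - 2) (Or.inl ht0.ne')))
  have h0mem : (0:ℝ) ∈ Ioo (Q a) (Q 1) := ⟨hQa, hQ1⟩
  obtain ⟨τ₀, hτ₀mem, hQτ₀⟩ := intermediate_value_Ioo ha1.le hQcont h0mem
  exact ⟨τ₀, lt_trans ha0 hτ₀mem.1, hτ₀mem.2, hQτ₀⟩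

theorem f_shape_p_lt_two_beta_large (p μ₁ μ₂ β : ℝ) (h12 : μ₂ < μ₁) (hμ₂ : 0 < μ₂)
    (hp1 : 1 < p) (hp2 : p < 2) (hβ : (p - 1) * μ₂ ≤ β)
    (f : ℝ → ℝ)
    (hf : ∀ τ, 0 ≤ τ → f τ = (1 + τ ^ 2) / (μ₁ + 2 * β * τ ^ p + μ₂ * τ ^ (2 * p)) ^ (1 / p)) :
    ∃ τ₀ : ℝ, 0 < τ₀ ∧ τ₀ < 1 ∧
      StrictAntiOn f (Set.Icc 0 τ₀) ∧
      StrictMonoOn f (Set.Ici τ₀) ∧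
      (∀ τ, 0 ≤ τ → τ ≠ τ₀ → f τ₀ < f τ) ∧
      IsLocalMaxOn f (Set.Ici 0) 0 := by
  have hβ0 : 0 < β := lt_of_lt_of_le (by nlinarith) hβ
  have hμ₁ : 0 < μ₁ := lt_trans hμ₂ h12
  have hp0 : (0:ℝ) < p := by linarith
  set F : ℝ → ℝ :=
    fun τ => (1 + τ ^ 2) / (μ₁ + 2 * β * τ ^ p + μ₂ * τ ^ (2 * p)) ^ (1 / p) with hFdef
  set Q : ℝ → ℝ := fun t => μ₁ + β * t ^ p - β * t ^ (p - 2) - μ₂ * t ^ (2 * p - 2) with hQdef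
  have hQm : StrictMonoOn Q (Ioi 0) := Q_strictMono hμ₂ hp1 hp2 hβ
  obtain ⟨τ₀, hτ₀0, hτ₀1, hQτ₀⟩ := existence_of_zero h12 hμ₂ hp1 hp2 hβ
  -- G positivity for t ≥ 0
  have hGpos : ∀ t : ℝ, 0 ≤ t → 0 < μ₁ + 2 * β * t ^ p + μ₂ * t ^ (2 * p) := by
    intro t ht
    rcases eq_or_lt_of_le ht with h | h
    · rw [← h, Real.zero_rpow hp0.ne',
        Real.zero_rpow (ne_of_gt (by linarith : (0:ℝ) < 2 * p))]
      simp only [mul_zero, add_zero]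
      exact hμ₁
    · have hA : 0 < t ^ p := Real.rpow_pos_of_pos h p
      have hB : 0 < t ^ (2 * p) := Real.rpow_pos_of_pos h _
      nlinarith
  -- continuity of F on [0,∞)
  have hFcont : ∀ t : ℝ, 0 ≤ t → ContinuousAt F t := by
    intro t ht
    have hGc : ContinuousAt (fun s : ℝ => μ₁ + 2 * β * s ^ p + μ₂ * s ^ (2 * p)) t := by
      apply ContinuousAt.add
      apply ContinuousAt.add continuousAt_const
      · exact continuousAt_const.mul (Real.continuousAt_rpow_const t p (Or.inr hp0.le))
      · exact continuousAt_const.mul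
          (Real.continuousAt_rpow_const t (2 * p) (Or.inr (by linarith)))
    have hdenc : ContinuousAt
        (fun s : ℝ => (μ₁ + 2 * β * s ^ p + μ₂ * s ^ (2 * p)) ^ (1 / p)) t :=
      hGc.rpow_const (Or.inl (hGpos t ht).ne')
    have hnumc : ContinuousAt (fun s : ℝ => 1 + s ^ 2) t := by fun_prop
    exact hnumc.div hdenc (Real.rpow_pos_of_pos (hGpos t ht) _).ne'
  -- sign of the derivative
  have hderiv_neg : ∀ x : ℝ, 0 < x → x < τ₀ → deriv F x < 0 := by
    intro x hx hxτ
    rw [(hasDerivAt_F hμ₁ hμ₂ hβ0 hp1 hx).deriv]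
    have hQτ₀' : Q τ₀ = 0 := hQτ₀
    have hQx : Q x < Q τ₀ := hQm hx hτ₀0 hxτ
    rw [hQτ₀'] at hQx
    have hG := hGpos x hx.le
    have h1 : 0 < (μ₁ + 2 * β * x ^ p + μ₂ * x ^ (2 * p)) ^ (1 / p - 1) :=
      Real.rpow_pos_of_pos hG _
    have h2 : 0 < ((μ₁ + 2 * β * x ^ p + μ₂ * x ^ (2 * p)) ^ (1 / p)) ^ 2 := by positivity
    have h3 : 2 * x * Q x < 0 := mul_neg_of_pos_of_neg (by linarith) hQx
    exact div_neg_of_neg_of_pos (mul_neg_of_pos_of_neg h1 h3) h2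
  have hderiv_pos : ∀ x : ℝ, τ₀ < x → 0 < deriv F x := by
    intro x hxτ
    have hx : 0 < x := lt_trans hτ₀0 hxτ
    rw [(hasDerivAt_F hμ₁ hμ₂ hβ0 hp1 hx).deriv]
    have hQτ₀' : Q τ₀ = 0 := hQτ₀
    have hQx : Q τ₀ < Q x := hQm hτ₀0 hx hxτ
    rw [hQτ₀'] at hQx
    have hG := hGpos x hx.le
    have h1 : 0 < (μ₁ + 2 * β * x ^ p + μ₂ * x ^ (2 * p)) ^ (1 / p - 1) :=
      Real.rpow_pos_of_pos hG _
    have h2 : 0 < ((μ₁ + 2 * β * x ^ p + μ₂ * x ^ (2 * p)) ^ (1 / p)) ^ 2 := by positivity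
    have h3 : 0 < 2 * x * Q x := mul_pos (by linarith) hQx
    exact div_pos (mul_pos h1 h3) h2
  -- F strictly decreasing on [0, τ₀]
  have hFanti : StrictAntiOn F (Icc 0 τ₀) := by
    apply strictAntiOn_of_deriv_neg (convex_Icc 0 τ₀)
    · exact fun t ht => (hFcont t ht.1).continuousWithinAt
    · intro x hx
      rw [interior_Icc] at hx
      exact hderiv_neg x hx.1 hx.2
  -- F strictly increasing on [τ₀, ∞)
  have hFmono : StrictMonoOn F (Ici τ₀) := by
    apply strictMonoOn_of_deriv_pos (convex_Ici τ₀)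
    · intro t ht
      have : τ₀ ≤ t := ht
      exact (hFcont t (by linarith)).continuousWithinAt
    · intro x hx
      rw [interior_Ici] at hx
      exact hderiv_pos x hx
  -- transfer to f
  have hfanti : StrictAntiOn f (Icc 0 τ₀) := by
    intro x hx y hy hxy
    rw [hf x hx.1, hf y hy.1]
    exact hFanti hx hy hxy
  have hfmono : StrictMonoOn f (Ici τ₀) := by
    intro x hx y hy hxy
    have hx0 : (0:ℝ) ≤ x := le_trans hτ₀0.le hx
    have hy0 : (0:ℝ) ≤ y := le_trans hτ₀0.le hy
    rw [hf x hx0, hf y hy0]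
    exact hFmono hx hy hxy
  refine ⟨τ₀, hτ₀0, hτ₀1, hfanti, hfmono, ?_, ?_⟩
  · intro τ hτ hne
    rcases hne.lt_or_gt with h | h
    · exact hfanti ⟨hτ, h.le⟩ ⟨hτ₀0.le, le_refl τ₀⟩ h
    · exact hfmono (mem_Ici.2 (le_refl τ₀)) (mem_Ici.2 h.le) h
  · have hmem : Icc (0:ℝ) τ₀ ∈ nhdsWithin (0:ℝ) (Ici 0) := by
      rw [← Set.Ici_inter_Iic]
      exact Filter.inter_mem self_mem_nhdsWithin
        (mem_nhdsWithin_of_mem_nhds (Iic_mem_nhds hτ₀0))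
    apply Filter.eventually_of_mem hmem
    intro x hx
    rcases eq_or_lt_of_le hx.1 with h | h
    · rw [← h]
    · exact (hfanti ⟨le_refl 0, hτ₀0.le⟩ hx h).le
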